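/- In the 132-core D_n, the degree of a vertex (i,j) equals (j - i)·(n - 1 - (j - i)). -/
import Mathlib


/-- Vertices of the cores: pairs (i,j) with 1 ≤ i ≤ j ≤ n. -/
def DVert (n : ℕ) (p : ℕ × ℕ) : Prop := 1 ≤ p.1 ∧ p.1 ≤ p.2 ∧ p.2 ≤ n

/-- One-directional (southeast) adjacency of the 132-core. -/
def DOne (n : ℕ) (p q : ℕ × ℕ) : Prop :=
  p.1 < q.1 ∧ q.1 ≤ p.2 ∧ p.2 < q.2 ∧ q.2 ≤ n

/-- Adjacency of the 132-core `D_n`. -/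
def DAdj (n : ℕ) (p q : ℕ × ℕ) : Prop := DOne n p q ∨ DOne n q p

/-- One-directional adjacency of the 123-core. -/
def UOne (n : ℕ) (p q : ℕ × ℕ) : Prop :=
  p.1 < q.1 ∧ p.2 < q.2 ∧ q.1 ≤ n ∧ q.2 ≤ n

/-- Adjacency of the 123-core `U_n`. -/
def UAdj (n : ℕ) (p q : ℕ × ℕ) : Prop := UOne n p q ∨ UOne n q p

/-- In the 132-core `D_n`, the degree of vertex `(i,j)` is
`(j-i)·(n-1-(j-i))`. -/
theorem dcore_degree (n i j : ℕ) (hv : DVert n (i, j)) :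
    Nat.card {q : ℕ × ℕ // DVert n q ∧ DAdj n (i, j) q} =
      (j - i) * (n - 1 - (j - i)) := by
  obtain ⟨h1, h2, h3⟩ := hv
  set S : Finset (ℕ × ℕ) :=
    (Finset.Ioc i j ×ˢ Finset.Ioc j n) ∪ (Finset.Ico 1 i ×ˢ Finset.Ico i j) with hS
  have hset : {q : ℕ × ℕ | DVert n q ∧ DAdj n (i, j) q} = ↑S := by
    ext ⟨k, l⟩
    simp only [hS, Set.mem_setOf_eq, Finset.coe_union, Finset.coe_product,
      Set.mem_union, Set.mem_prod, Finset.mem_coe, Finset.mem_Ioc, Finset.mem_Ico,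
      DVert, DAdj, DOne]
    omega
  have : Nat.card {q : ℕ × ℕ // DVert n q ∧ DAdj n (i, j) q}
      = Set.ncard {q : ℕ × ℕ | DVert n q ∧ DAdj n (i, j) q} :=
    Nat.card_coe_set_eq _
  rw [this, hset, Set.ncard_coe_finset, hS]
  rw [Finset.card_union_of_disjoint]
  · rw [Finset.card_product, Finset.card_product, Nat.card_Ioc, Nat.card_Ioc,
      Nat.card_Ico, Nat.card_Ico]
    have : (j - i) * (n - j) + (i - 1) * (j - i) = (j - i) * ((n - j) + (i - 1)) := by
      ring
    rw [this]
    congr 1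
    omega
  · rw [Finset.disjoint_left]
    rintro ⟨k, l⟩ hk hl
    simp only [Finset.mem_product, Finset.mem_Ioc, Finset.mem_Ico] at hk hl
    omega
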